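/- Let Ω ⊆ ℂ be a connected, simply connected open set containing a nonempty open real interval I ⊆ ℝ, and fix s₀ ∈ I. Let c = (c₁,c₂,c₃) and e = (e₁,e₂,e₃) : Ω → ℂ³ be holomorphic componentwise, with c(s) ∈ ℝ³ and e(s) ∈ ℝ³ for all s ∈ I, and suppose that for all s ∈ I: c₁'(s)² + c₂'(s)² = e₁(s)² + e₂(s)² and c₁'(s)e₁(s) + c₂'(s)e₂(s) = 0. Define x : Ω → ℝ³ by x(z) = Re[c(z) − i∫_{s₀}^{z} e(w) dw] (the integral along any path in Ω). Then: (i) x(s) = c(s) for all s ∈ I; (ii) ∂x/∂v(s) = e(s) for all s ∈ I (z = u + iv); and (iii) the holomorphic curve φ = c' − i e satisfies φ₁² + φ₂² = 0 on all of Ω, so that x has vanishing isotropic mean curvature at every point of Ω where the third component of x_u × x_v is nonzero. This is the Björling representation: x is the simply isotropic minimal surface containing the curve c with prescribed tangent field e along c. -/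

import Mathlib

noncomputable section

/-- Partial derivative of a map on ℂ ≅ ℝ² in the u-direction (real direction 1). -/
def du {E : Type*} [NormedAddCommGroup E] [NormedSpace ℝ E]
    (f : ℂ → E) : ℂ → E := fun z => fderiv ℝ f z 1

/-- Partial derivative of a map on ℂ ≅ ℝ² in the v-direction (direction i). -/
def dv {E : Type*} [NormedAddCommGroup E] [NormedSpace ℝ E]
    (f : ℂ → E) : ℂ → E := fun z => fderiv ℝ f z Complex.I

/-- The degenerate simply isotropic inner product on ℝ³: ⟨u,v⟩ = u₁v₁ + u₂v₂. -/
def isoInner (a b : ℝ × ℝ × ℝ) : ℝ := a.1 * b.1 + a.2.1 * b.2.1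

/-- The Euclidean dot product on ℝ³. -/
def dot3 (a b : ℝ × ℝ × ℝ) : ℝ := a.1 * b.1 + a.2.1 * b.2.1 + a.2.2 * b.2.2

/-- The Euclidean cross product on ℝ³. -/
def cross3 (a b : ℝ × ℝ × ℝ) : ℝ × ℝ × ℝ :=
  (a.2.1 * b.2.2 - a.2.2 * b.2.1, a.2.2 * b.1 - a.1 * b.2.2, a.1 * b.2.1 - a.2.1 * b.1)

/-- First fundamental form coefficients (isotropic metric) of x : ℂ → ℝ³. -/
def g11 (x : ℂ → ℝ × ℝ × ℝ) (z : ℂ) : ℝ := isoInner (du x z) (du x z)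
def g12 (x : ℂ → ℝ × ℝ × ℝ) (z : ℂ) : ℝ := isoInner (du x z) (dv x z)
def g22 (x : ℂ → ℝ × ℝ × ℝ) (z : ℂ) : ℝ := isoInner (dv x z) (dv x z)

/-- The minimal normal: the unique vector of the form (n₁,n₂,1) Euclidean-orthogonal to
x_u and x_v (obtained by normalizing the cross product so its third component is 1). -/
def Nm (x : ℂ → ℝ × ℝ × ℝ) (z : ℂ) : ℝ × ℝ × ℝ :=
  ((cross3 (du x z) (dv x z)).1 / (cross3 (du x z) (dv x z)).2.2,
   (cross3 (du x z) (dv x z)).2.1 / (cross3 (du x z) (dv x z)).2.2, 1)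

/-- Second fundamental form coefficients with respect to the minimal normal. -/
def h11 (x : ℂ → ℝ × ℝ × ℝ) (z : ℂ) : ℝ := dot3 (du (du x) z) (Nm x z)
def h12 (x : ℂ → ℝ × ℝ × ℝ) (z : ℂ) : ℝ := dot3 (du (dv x) z) (Nm x z)
def h22 (x : ℂ → ℝ × ℝ × ℝ) (z : ℂ) : ℝ := dot3 (dv (dv x) z) (Nm x z)

/-- The isotropic Gaussian curvature. -/
def Kcurv (x : ℂ → ℝ × ℝ × ℝ) (z : ℂ) : ℝ :=
  (h11 x z * h22 x z - (h12 x z) ^ 2) / (g11 x z * g22 x z - (g12 x z) ^ 2)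

/-- The isotropic mean curvature. -/
def meanH (x : ℂ → ℝ × ℝ × ℝ) (z : ℂ) : ℝ :=
  (g11 x z * h22 x z - 2 * g12 x z * h12 x z + g22 x z * h11 x z) /
    (2 * (g11 x z * g22 x z - (g12 x z) ^ 2))

/-- The Björling surface x(z) = Re[c(z) − i∫_{s₀}^z e(w)dw], expressed through
componentwise holomorphic primitives E of e vanishing at s₀ (which exist, and whose
path integrals are path-independent, because Ω is simply connected). -/
def bjorling (c₁ c₂ c₃ E₁ E₂ E₃ : ℂ → ℂ) : ℂ → ℝ × ℝ × ℝ := fun z =>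
  ((c₁ z - Complex.I * E₁ z).re, (c₂ z - Complex.I * E₂ z).re,
    (c₃ z - Complex.I * E₃ z).re)
lemma fderiv_re3_apply {f₁ f₂ f₃ : ℂ → ℂ} {p₁ p₂ p₃ z : ℂ}
    (h₁ : HasDerivAt f₁ p₁ z) (h₂ : HasDerivAt f₂ p₂ z) (h₃ : HasDerivAt f₃ p₃ z) (w : ℂ) :
    fderiv ℝ (fun z => ((f₁ z).re, (f₂ z).re, (f₃ z).re)) z w
      = ((p₁ * w).re, (p₂ * w).re, (p₃ * w).re) := by
  have H₁ : HasFDerivAt (fun z => (f₁ z).re)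
      (Complex.reCLM.comp (p₁ • (1 : ℂ →L[ℝ] ℂ))) z :=
    Complex.reCLM.hasFDerivAt.comp z h₁.complexToReal_fderiv
  have H₂ : HasFDerivAt (fun z => (f₂ z).re)
      (Complex.reCLM.comp (p₂ • (1 : ℂ →L[ℝ] ℂ))) z :=
    Complex.reCLM.hasFDerivAt.comp z h₂.complexToReal_fderiv
  have H₃ : HasFDerivAt (fun z => (f₃ z).re)
      (Complex.reCLM.comp (p₃ • (1 : ℂ →L[ℝ] ℂ))) z :=
    Complex.reCLM.hasFDerivAt.comp z h₃.complexToReal_fderiv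
  rw [(H₁.prodMk (H₂.prodMk H₃)).fderiv]
  simp [mul_comm, Complex.smul_re]

/-- Björling representation. Let Ω ⊆ ℂ be a connected, simply connected open set
containing a nonempty open real interval I, s₀ ∈ I, and let c = (c₁,c₂,c₃) and
e = (e₁,e₂,e₃) be componentwise holomorphic on Ω, real on I, satisfying the isotropic
Björling conditions ⟨c',c'⟩ = ⟨e,e⟩ and ⟨c',e⟩ = 0 along I. Then the map
x(z) = Re[c(z) − i∫_{s₀}^z e(w)dw] satisfies: (i) x = c on I; (ii) x_v = e on I;
(iii) the holomorphic curve φ = c' − ie satisfies φ₁² + φ₂² = 0 on all of Ω, so x has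
vanishing isotropic mean curvature at every point of Ω where the third component of
x_u × x_v is nonzero. -/
theorem stmt19 (Ω : Set ℂ) (hΩ : IsOpen Ω) (hΩconn : IsConnected Ω)
    (hΩsc : SimplyConnectedSpace ↥Ω)
    (I : Set ℝ) (hI : IsOpen I) (hIne : I.Nonempty) (hIint : I.OrdConnected)
    (hIΩ : ∀ s ∈ I, (s : ℂ) ∈ Ω) (s₀ : ℝ) (hs₀ : s₀ ∈ I)
    (c₁ c₂ c₃ e₁ e₂ e₃ : ℂ → ℂ)
    (hc₁ : DifferentiableOn ℂ c₁ Ω) (hc₂ : DifferentiableOn ℂ c₂ Ω)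
    (hc₃ : DifferentiableOn ℂ c₃ Ω)
    (he₁ : DifferentiableOn ℂ e₁ Ω) (he₂ : DifferentiableOn ℂ e₂ Ω)
    (he₃ : DifferentiableOn ℂ e₃ Ω)
    (hcreal : ∀ s ∈ I, (c₁ s).im = 0 ∧ (c₂ s).im = 0 ∧ (c₃ s).im = 0)
    (hereal : ∀ s ∈ I, (e₁ s).im = 0 ∧ (e₂ s).im = 0 ∧ (e₃ s).im = 0)
    (hBj₁ : ∀ s ∈ I, (deriv c₁ s) ^ 2 + (deriv c₂ s) ^ 2 = (e₁ s) ^ 2 + (e₂ s) ^ 2)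
    (hBj₂ : ∀ s ∈ I, deriv c₁ s * e₁ s + deriv c₂ s * e₂ s = 0)
    (E₁ E₂ E₃ : ℂ → ℂ)
    (hE₁ : ∀ z ∈ Ω, HasDerivAt E₁ (e₁ z) z)
    (hE₂ : ∀ z ∈ Ω, HasDerivAt E₂ (e₂ z) z)
    (hE₃ : ∀ z ∈ Ω, HasDerivAt E₃ (e₃ z) z)
    (hE₀ : E₁ s₀ = 0 ∧ E₂ s₀ = 0 ∧ E₃ s₀ = 0) :
    (∀ s ∈ I, bjorling c₁ c₂ c₃ E₁ E₂ E₃ s = ((c₁ s).re, (c₂ s).re, (c₃ s).re)) ∧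
    (∀ s ∈ I, dv (bjorling c₁ c₂ c₃ E₁ E₂ E₃) s = ((e₁ s).re, (e₂ s).re, (e₃ s).re)) ∧
    (∀ z ∈ Ω, (deriv c₁ z - Complex.I * e₁ z) ^ 2 +
        (deriv c₂ z - Complex.I * e₂ z) ^ 2 = 0) ∧
    (∀ z ∈ Ω,
      (cross3 (du (bjorling c₁ c₂ c₃ E₁ E₂ E₃) z)
          (dv (bjorling c₁ c₂ c₃ E₁ E₂ E₃) z)).2.2 ≠ 0 →
        meanH (bjorling c₁ c₂ c₃ E₁ E₂ E₃) z = 0) := by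
  obtain ⟨hE₁0, hE₂0, hE₃0⟩ := hE₀
  -- derivatives of the components of the Björling map
  have hf₁ : ∀ z ∈ Ω, HasDerivAt (fun w => c₁ w - Complex.I * E₁ w)
      (deriv c₁ z - Complex.I * e₁ z) z := fun z hz =>
    ((hc₁.differentiableAt (hΩ.mem_nhds hz)).hasDerivAt).sub ((hE₁ z hz).const_mul Complex.I)
  have hf₂ : ∀ z ∈ Ω, HasDerivAt (fun w => c₂ w - Complex.I * E₂ w)
      (deriv c₂ z - Complex.I * e₂ z) z := fun z hz =>
    ((hc₂.differentiableAt (hΩ.mem_nhds hz)).hasDerivAt).sub ((hE₂ z hz).const_mul Complex.I)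
  have hf₃ : ∀ z ∈ Ω, HasDerivAt (fun w => c₃ w - Complex.I * E₃ w)
      (deriv c₃ z - Complex.I * e₃ z) z := fun z hz =>
    ((hc₃.differentiableAt (hΩ.mem_nhds hz)).hasDerivAt).sub ((hE₃ z hz).const_mul Complex.I)
  -- imaginary part of E vanishes on I
  have hImE : ∀ (E e : ℂ → ℂ), (∀ z ∈ Ω, HasDerivAt E (e z) z) →
      (∀ s ∈ I, (e s).im = 0) → E s₀ = 0 → ∀ s ∈ I, (E s).im = 0 := by
    intro E e hE he hE0 s hs
    have key : ∀ t ∈ I, HasDerivAt (fun y : ℝ => ((-Complex.I) * E y).re) ((e t).im) t := by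
      intro t ht
      have h := (((hE t (hIΩ t ht)).const_mul (-Complex.I))).real_of_complex
      convert h using 1
      simp [Complex.mul_re]
    have hconst : ((-Complex.I) * E ↑s).re = ((-Complex.I) * E ↑s₀).re := by
      apply hIint.convex.is_const_of_fderivWithin_eq_zero (𝕜 := ℝ)
        (f := fun y : ℝ => ((-Complex.I) * E y).re) ?_ ?_ hs hs₀
      · intro t ht
        exact (key t ht).differentiableAt.differentiableWithinAt
      · intro t ht
        have h0 : HasDerivAt (fun y : ℝ => ((-Complex.I) * E y).re) 0 t := by
          rw [← he t ht]; exact key t ht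
        rw [fderivWithin_of_isOpen hI ht, h0.hasFDerivAt.fderiv]
        ext
        simp
    have : ((-Complex.I) * E ↑s).re = (E ↑s).im := by simp [Complex.mul_re]
    rw [← this, hconst]
    simp [hE0]
  have hImE₁ := hImE E₁ e₁ hE₁ (fun s hs => (hereal s hs).1) hE₁0
  have hImE₂ := hImE E₂ e₂ hE₂ (fun s hs => (hereal s hs).2.1) hE₂0
  have hImE₃ := hImE E₃ e₃ hE₃ (fun s hs => (hereal s hs).2.2) hE₃0
  -- imaginary part of deriv c vanishes on I
  have hImc' : ∀ (c : ℂ → ℂ), DifferentiableOn ℂ c Ω → (∀ s ∈ I, (c s).im = 0) →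
      ∀ s ∈ I, (deriv c s).im = 0 := by
    intro c hc hr s hs
    have h1 : HasDerivAt (fun y : ℝ => ((-Complex.I) * c y).re) ((deriv c ↑s).im) s := by
      have h := (((hc.differentiableAt (hΩ.mem_nhds (hIΩ s hs))).hasDerivAt.const_mul
        (-Complex.I))).real_of_complex
      convert h using 1
      simp [Complex.mul_re]
    have h2 : HasDerivAt (fun y : ℝ => ((-Complex.I) * c y).re) 0 s := by
      have hev : (fun y : ℝ => ((-Complex.I) * c y).re) =ᶠ[nhds s] fun _ => (0:ℝ) := by
        filter_upwards [hI.mem_nhds hs] with y hy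
        simp [Complex.mul_re, hr y hy]
      exact (hasDerivAt_const s (0:ℝ)).congr_of_eventuallyEq hev
    exact h1.unique h2
  have hImc₁ := hImc' c₁ hc₁ (fun s hs => (hcreal s hs).1)
  have hImc₂ := hImc' c₂ hc₂ (fun s hs => (hcreal s hs).2.1)
  have hImc₃ := hImc' c₃ hc₃ (fun s hs => (hcreal s hs).2.2)
  -- part (iii): the isotropy relation on all of Ω
  have hΦ : ∀ z ∈ Ω, (deriv c₁ z - Complex.I * e₁ z) ^ 2 +
      (deriv c₂ z - Complex.I * e₂ z) ^ 2 = 0 := by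
    have hφ₁ : DifferentiableOn ℂ (fun z => deriv c₁ z - Complex.I * e₁ z) Ω :=
      ((hc₁.analyticOnNhd hΩ).deriv).differentiableOn.sub (he₁.const_mul Complex.I)
    have hφ₂ : DifferentiableOn ℂ (fun z => deriv c₂ z - Complex.I * e₂ z) Ω :=
      ((hc₂.analyticOnNhd hΩ).deriv).differentiableOn.sub (he₂.const_mul Complex.I)
    have hΦana : AnalyticOnNhd ℂ (fun z => (deriv c₁ z - Complex.I * e₁ z) ^ 2 +
        (deriv c₂ z - Complex.I * e₂ z) ^ 2) Ω :=
      (((hφ₁.pow 2).add (hφ₂.pow 2)).analyticOnNhd hΩ)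
    have hzero : ∀ s ∈ I, (deriv c₁ (↑s) - Complex.I * e₁ ↑s) ^ 2 +
        (deriv c₂ ↑s - Complex.I * e₂ ↑s) ^ 2 = 0 := by
      intro s hs
      have h1 := hBj₁ s hs
      have h2 := hBj₂ s hs
      linear_combination h1 - 2 * Complex.I * h2 + (e₁ (↑s:ℂ) ^ 2 + e₂ (↑s:ℂ) ^ 2) * Complex.I_sq
    have htend : Filter.Tendsto (fun y : ℝ => (y : ℂ)) (nhdsWithin s₀ {s₀}ᶜ)
        (nhdsWithin (↑s₀ : ℂ) {(↑s₀ : ℂ)}ᶜ) := by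
      apply tendsto_nhdsWithin_of_tendsto_nhds_of_eventually_within
      · exact Complex.continuous_ofReal.continuousAt.mono_left nhdsWithin_le_nhds
      · filter_upwards [self_mem_nhdsWithin] with y hy
        simpa using fun h => hy (Complex.ofReal_inj.mp h)
    have hfreq : ∃ᶠ z in nhdsWithin (↑s₀ : ℂ) {(↑s₀ : ℂ)}ᶜ,
        (deriv c₁ z - Complex.I * e₁ z) ^ 2 + (deriv c₂ z - Complex.I * e₂ z) ^ 2 = 0 := by
      apply htend.frequently
      apply Filter.Eventually.frequently
      filter_upwards [nhdsWithin_le_nhds (hI.mem_nhds hs₀)] with y hy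
      exact hzero y hy
    exact hΦana.eqOn_zero_of_preconnected_of_frequently_eq_zero hΩconn.isPreconnected
      (hIΩ s₀ hs₀) hfreq
  refine ⟨?_, ?_, hΦ, ?_⟩
  · -- part (i)
    intro s hs
    simp [bjorling, Complex.sub_re, Complex.mul_re, hImE₁ s hs, hImE₂ s hs, hImE₃ s hs]
  · -- part (ii)
    intro s hs
    have hsΩ := hIΩ s hs
    have : dv (bjorling c₁ c₂ c₃ E₁ E₂ E₃) ↑s =
        (((deriv c₁ ↑s - Complex.I * e₁ ↑s) * Complex.I).re,
         ((deriv c₂ ↑s - Complex.I * e₂ ↑s) * Complex.I).re,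
         ((deriv c₃ ↑s - Complex.I * e₃ ↑s) * Complex.I).re) := by
      simp only [dv, bjorling]
      exact fderiv_re3_apply (hf₁ _ hsΩ) (hf₂ _ hsΩ) (hf₃ _ hsΩ) Complex.I
    rw [this]
    simp [Complex.sub_re, Complex.sub_im, Complex.mul_re, Complex.mul_im,
      hImc₁ s hs, hImc₂ s hs, hImc₃ s hs]
  · -- part (iv)
    intro z hz hcr
    -- second derivative data
    have hderivOn : ∀ (c : ℂ → ℂ), DifferentiableOn ℂ c Ω → DifferentiableOn ℂ (deriv c) Ω :=
      fun c hc => ((hc.analyticOnNhd hΩ).deriv).differentiableOn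
    have hφ₁d : DifferentiableAt ℂ (fun w => deriv c₁ w - Complex.I * e₁ w) z :=
      (((hderivOn c₁ hc₁).sub (he₁.const_mul Complex.I)).differentiableAt (hΩ.mem_nhds hz))
    have hφ₂d : DifferentiableAt ℂ (fun w => deriv c₂ w - Complex.I * e₂ w) z :=
      (((hderivOn c₂ hc₂).sub (he₂.const_mul Complex.I)).differentiableAt (hΩ.mem_nhds hz))
    have hφ₃d : DifferentiableAt ℂ (fun w => deriv c₃ w - Complex.I * e₃ w) z :=
      (((hderivOn c₃ hc₃).sub (he₃.const_mul Complex.I)).differentiableAt (hΩ.mem_nhds hz))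
    set φ₁ : ℂ → ℂ := fun w => deriv c₁ w - Complex.I * e₁ w with hφ₁def
    set φ₂ : ℂ → ℂ := fun w => deriv c₂ w - Complex.I * e₂ w with hφ₂def
    set φ₃ : ℂ → ℂ := fun w => deriv c₃ w - Complex.I * e₃ w with hφ₃def
    set x : ℂ → ℝ × ℝ × ℝ := bjorling c₁ c₂ c₃ E₁ E₂ E₃ with hxdef
    set P₁ := φ₁ z with hP₁; set P₂ := φ₂ z with hP₂; set P₃ := φ₃ z with hP₃
    set Q₁ := deriv φ₁ z with hQ₁; set Q₂ := deriv φ₂ z with hQ₂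
    set Q₃ := deriv φ₃ z with hQ₃
    -- first derivatives
    have hdu : du x z = (P₁.re, P₂.re, P₃.re) := by
      have h := fderiv_re3_apply (hf₁ _ hz) (hf₂ _ hz) (hf₃ _ hz) 1
      simp only [mul_one] at h
      exact h
    have hdv : dv x z = ((P₁ * Complex.I).re, (P₂ * Complex.I).re, (P₃ * Complex.I).re) := by
      exact fderiv_re3_apply (hf₁ _ hz) (hf₂ _ hz) (hf₃ _ hz) Complex.I
    -- du x and dv x agree near z with nice functions
    have hduEq : du x =ᶠ[nhds z] fun w => ((φ₁ w).re, (φ₂ w).re, (φ₃ w).re) := by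
      filter_upwards [hΩ.mem_nhds hz] with w hw
      have h := fderiv_re3_apply (hf₁ _ hw) (hf₂ _ hw) (hf₃ _ hw) 1
      simp only [mul_one] at h
      exact h
    have hdvEq : dv x =ᶠ[nhds z] fun w =>
        ((φ₁ w * Complex.I).re, (φ₂ w * Complex.I).re, (φ₃ w * Complex.I).re) := by
      filter_upwards [hΩ.mem_nhds hz] with w hw
      exact fderiv_re3_apply (hf₁ _ hw) (hf₂ _ hw) (hf₃ _ hw) Complex.I
    -- second derivatives
    have hduu : du (du x) z = ((Q₁ * 1).re, (Q₂ * 1).re, (Q₃ * 1).re) := by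
      simp only [du]
      rw [hduEq.fderiv_eq]
      exact fderiv_re3_apply hφ₁d.hasDerivAt hφ₂d.hasDerivAt hφ₃d.hasDerivAt 1
    have hdudv : du (dv x) z =
        ((Q₁ * Complex.I * 1).re, (Q₂ * Complex.I * 1).re, (Q₃ * Complex.I * 1).re) := by
      simp only [du]
      rw [hdvEq.fderiv_eq]
      exact fderiv_re3_apply (hφ₁d.hasDerivAt.mul_const Complex.I)
        (hφ₂d.hasDerivAt.mul_const Complex.I) (hφ₃d.hasDerivAt.mul_const Complex.I) 1
    have hdvdv : dv (dv x) z =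
        ((Q₁ * Complex.I * Complex.I).re, (Q₂ * Complex.I * Complex.I).re,
         (Q₃ * Complex.I * Complex.I).re) := by
      simp only [dv]
      rw [hdvEq.fderiv_eq]
      exact fderiv_re3_apply (hφ₁d.hasDerivAt.mul_const Complex.I)
        (hφ₂d.hasDerivAt.mul_const Complex.I) (hφ₃d.hasDerivAt.mul_const Complex.I) Complex.I
    -- algebraic consequences of the isotropy relation
    have hP : P₁ ^ 2 + P₂ ^ 2 = 0 := hΦ z hz
    have hre : P₁.re * P₁.re - P₁.im * P₁.im + (P₂.re * P₂.re - P₂.im * P₂.im) = 0 := by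
      have := congrArg Complex.re hP
      simpa [pow_two, Complex.add_re, Complex.mul_re] using this
    have him : P₁.re * P₁.im + P₂.re * P₂.im = 0 := by
      have := congrArg Complex.im hP
      simp [pow_two, Complex.add_im, Complex.mul_im] at this
      linarith
    have hg12 : g12 x z = 0 := by
      simp only [g12, isoInner, hdu, hdv, Complex.mul_I_re]
      linarith
    have hgeq : g11 x z = g22 x z := by
      simp only [g11, g22, isoInner, hdu, hdv, Complex.mul_I_re]
      nlinarith [hre]
    have hh : h22 x z = - h11 x z := by
      simp only [h22, h11, dot3, hduu, hdvdv]
      simp [Complex.mul_I_re, Complex.mul_I_im]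
      ring
    show meanH x z = 0
    rw [meanH, hg12, hgeq, hh]
    rw [show g22 x z * -h11 x z - 2 * 0 * h12 x z + g22 x z * h11 x z = 0 by ring, zero_div]
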